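/- For n ≥ 1 let w(n) denote the B-ary expansion of n written most significant digit first (no leading zero), and set w(0) to be the empty word, with A_{empty word} = I_d. For a word w = w_1…w_{K+1} of length K+1 over {0,…,B−1} (leading zeros allowed), let (w)_B = Σ_{i=1}^{K+1} w_i B^{K+1−i} be its integer value. Then for every integer N ≥ 1, setting K = ⌊log_B N⌋ (i.e. B^K ≤ N < B^{K+1}), the exact identity Σ_{n=0}^{N} A_{w(n)} C = (I_d − A_0) Σ_{k=0}^{K} Q^k C + Σ_{w of length K+1 with (w)_B ≤ N} A_w C holds. -/

import Mathlib

open scoped Classical BigOperators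
open Filter Asymptotics

attribute [local instance] Matrix.linftyOpNormedAddCommGroup Matrix.linftyOpNormedRing

noncomputable section

/-- `A_w = A_{w_1} ⋯ A_{w_K}` for a word `w` of length `K` over the digit alphabet. -/
def wordProd {B d : ℕ} (A : Fin B → Matrix (Fin d) (Fin d) ℂ) {K : ℕ}
    (w : Fin K → Fin B) : Matrix (Fin d) (Fin d) ℂ :=
  ((List.ofFn w).map A).prod

/-- `(0.w)_B = Σ_{k=1}^K w_k B^{-k}`. -/
def wordVal {B K : ℕ} (w : Fin K → Fin B) : ℝ :=
  ∑ k : Fin K, (w k : ℝ) / (B : ℝ) ^ ((k : ℕ) + 1)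

/-- The running sum `S_K(x) = Σ_{|w|=K, (0.w)_B ≤ x} A_w C`. -/
def runSum {B d : ℕ} (A : Fin B → Matrix (Fin d) (Fin d) ℂ) (C : Fin d → ℂ)
    (K : ℕ) (x : ℝ) : Fin d → ℂ :=
  ∑ w : Fin K → Fin B, if wordVal w ≤ x then (wordProd A w).mulVec C else 0

/-- The basic dilation equation for data `ρ, ω, V`. -/
def DilationEq {B d : ℕ} (A : Fin B → Matrix (Fin d) (Fin d) ℂ) (ρ : ℝ) (ω : ℂ)
    (V : Fin d → ℂ) (Φ : ℝ → Fin d → ℂ) : Prop :=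
  Φ 0 = 0 ∧ Φ 1 = V ∧
    ∀ r : Fin B, ∀ x : ℝ, (r : ℝ) / B ≤ x → x < ((r : ℝ) + 1) / B →
      Φ x = ((ρ : ℂ) * ω)⁻¹ •
        ((∑ s ∈ Finset.univ.filter fun s : Fin B => s < r, (A s).mulVec V) +
          (A r).mulVec (Φ (B * x - r)))

/-- `A_{w(n)}`: the product of the matrices along the `B`-ary digits of `n`, most
significant digit first (empty product, i.e. the identity, for `n = 0`). -/
def digitProd {B d : ℕ} (A : Fin B → Matrix (Fin d) (Fin d) ℂ) (n : ℕ) :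
    Matrix (Fin d) (Fin d) ℂ :=
  (((Nat.digits B n).reverse).map fun r => if h : r < B then A ⟨r, h⟩ else 1).prod

/-- `(w)_B = Σ_{i=1}^K w_i B^{K-i}`: the integer value of a word read most significant
digit first. -/
def wordIntVal {B K : ℕ} (w : Fin K → Fin B) : ℕ :=
  ∑ i : Fin K, (w i : ℕ) * B ^ (K - 1 - (i : ℕ))

namespace RunSumAux

variable {B d : ℕ}

/-- `A_0^{K - len(n)} A_{w(n)}`. -/
def padProd (hB : 0 < B) (A : Fin B → Matrix (Fin d) (Fin d) ℂ) (K n : ℕ) :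
    Matrix (Fin d) (Fin d) ℂ :=
  (A ⟨0, hB⟩) ^ (K - (Nat.digits B n).length) * digitProd A n

lemma digitProd_zero (A : Fin B → Matrix (Fin d) (Fin d) ℂ) : digitProd A 0 = 1 := by
  simp [digitProd]

lemma digits_step (hB : 2 ≤ B) {n r : ℕ} (hr : r < B) (h : B * n + r ≠ 0) :
    Nat.digits B (B * n + r) = r :: Nat.digits B n := by
  have h1 : (B * n + r) % B = r := by
    rw [Nat.mul_add_mod, Nat.mod_eq_of_lt hr]
  have h2 : (B * n + r) / B = n := by
    rw [Nat.mul_add_div (by omega), Nat.div_eq_of_lt hr, add_zero]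
  rw [Nat.digits_def' (by omega : 1 < B) (Nat.pos_of_ne_zero h), h1, h2]

lemma digitProd_step (hB : 2 ≤ B) (A : Fin B → Matrix (Fin d) (Fin d) ℂ)
    {n r : ℕ} (hr : r < B) (h : B * n + r ≠ 0) :
    digitProd A (B * n + r) = digitProd A n * A ⟨r, hr⟩ := by
  rw [digitProd, digits_step hB hr h]
  simp [digitProd, List.reverse_cons, hr]

lemma padProd_step (hB : 2 ≤ B) (A : Fin B → Matrix (Fin d) (Fin d) ℂ)
    {n r : ℕ} (hr : r < B) (K : ℕ) :
    padProd (by omega) A (K + 1) (B * n + r) = padProd (by omega) A K n * A ⟨r, hr⟩ := by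
  by_cases h : B * n + r = 0
  · have hbn : B * n = 0 := by omega
    have hn : n = 0 := by rcases Nat.mul_eq_zero.mp hbn with h1 | h1 <;> omega
    have hr0 : r = 0 := by omega
    subst hn; subst hr0
    simp only [mul_zero, add_zero, padProd, Nat.digits_zero, List.length_nil,
      Nat.sub_zero, digitProd_zero, mul_one, pow_succ]
  · rw [padProd, padProd, digits_step hB hr h, digitProd_step hB A hr h]
    simp only [List.length_cons, Nat.succ_sub_succ_eq_sub, mul_assoc]

lemma wordIntVal_snoc {K : ℕ} (w : Fin K → Fin B) (r : Fin B) :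
    wordIntVal (Fin.snoc w r) = B * wordIntVal w + (r : ℕ) := by
  unfold wordIntVal
  rw [Fin.sum_univ_castSucc]
  simp only [Fin.snoc_castSucc, Fin.snoc_last, Fin.coe_castSucc, Fin.val_last,
    Nat.add_sub_cancel, Nat.sub_self, pow_zero, mul_one, Finset.mul_sum]
  congr 1
  apply Finset.sum_congr rfl
  intro i _
  have hi : (i : ℕ) < K := i.isLt
  have he : K - (i : ℕ) = (K - 1 - (i : ℕ)) + 1 := by omega
  rw [he, pow_succ]
  ring

lemma wordProd_snoc (A : Fin B → Matrix (Fin d) (Fin d) ℂ) {K : ℕ}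
    (w : Fin K → Fin B) (r : Fin B) :
    wordProd A (Fin.snoc w r) = wordProd A w * A r := by
  unfold wordProd
  rw [List.ofFn_succ']
  simp [Fin.snoc_castSucc, Fin.snoc_last]

lemma wordProd_eq_padProd (hB : 2 ≤ B) (A : Fin B → Matrix (Fin d) (Fin d) ℂ) :
    ∀ {K : ℕ} (w : Fin K → Fin B),
      wordProd A w = padProd (by omega) A K (wordIntVal w) := by
  intro K
  induction K with
  | zero =>
    intro w
    simp [wordProd, wordIntVal, padProd, digitProd]
  | succ K ih =>
    intro w
    rw [← Fin.snoc_init_self w, wordProd_snoc, wordIntVal_snoc, ih,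
      padProd_step hB A (w (Fin.last K)).2 K]

lemma sum_range_mul_aux {M : Type*} [AddCommMonoid M] (f : ℕ → M) :
    ∀ a : ℕ, ∑ m ∈ Finset.range (a * B), f m
      = ∑ n ∈ Finset.range a, ∑ r ∈ Finset.range B, f (B * n + r) := by
  intro a
  induction a with
  | zero => simp
  | succ a ih =>
    rw [Finset.sum_range_succ, ← ih, show (a + 1) * B = a * B + B by ring,
      Finset.sum_range_add]
    congr 1
    apply Finset.sum_congr rfl
    intro r _
    congr 1
    ring

lemma sum_words_eq_sum_range {M : Type*} [AddCommMonoid M] (hB : 2 ≤ B) :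
    ∀ (K : ℕ) (f : ℕ → M),
      ∑ w : Fin K → Fin B, f (wordIntVal w) = ∑ n ∈ Finset.range (B ^ K), f n := by
  intro K
  induction K with
  | zero =>
    intro f
    rw [pow_zero, Finset.sum_range_one]
    rw [Finset.sum_eq_single_of_mem Fin.elim0 (Finset.mem_univ _)
      (fun w _ hw => absurd (funext fun i => i.elim0) hw)]
    simp [wordIntVal]
  | succ K ih =>
    intro f
    have e1 : ∑ w : Fin (K + 1) → Fin B, f (wordIntVal w)
        = ∑ p : Fin B × (Fin K → Fin B), f (wordIntVal (Fin.snoc p.2 p.1)) :=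
      (Fintype.sum_equiv (Fin.snocEquiv fun _ => Fin B) _ _ fun p => rfl).symm
    rw [e1, Fintype.sum_prod_type]
    simp only [wordIntVal_snoc]
    rw [Finset.sum_comm]
    refine (ih fun n => ∑ r : Fin B, f (B * n + (r : ℕ))).trans ?_
    have e2 : ∀ n, ∑ r : Fin B, f (B * n + (r : ℕ)) = ∑ r ∈ Finset.range B, f (B * n + r) :=
      fun n => Fin.sum_univ_eq_sum_range (fun r => f (B * n + r)) B
    rw [Finset.sum_congr rfl fun n _ => e2 n, ← sum_range_mul_aux f (B ^ K), pow_succ]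

lemma sum_pow_eq (A : Fin B → Matrix (Fin d) (Fin d) ℂ) :
    ∀ K : ℕ, (∑ r, A r) ^ K = ∑ w : Fin K → Fin B, wordProd A w := by
  intro K
  induction K with
  | zero =>
    rw [pow_zero, Finset.sum_eq_single_of_mem Fin.elim0 (Finset.mem_univ _)
      (fun w _ hw => absurd (funext fun i => i.elim0) hw)]
    simp [wordProd]
  | succ K ih =>
    rw [pow_succ, ih, Finset.sum_mul]
    have e1 : ∑ w : Fin (K + 1) → Fin B, wordProd A w
        = ∑ p : Fin B × (Fin K → Fin B), wordProd A (Fin.snoc p.2 p.1) :=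
      (Fintype.sum_equiv (Fin.snocEquiv fun _ => Fin B) _ _ fun p => rfl).symm
    rw [e1, Fintype.sum_prod_type, Finset.sum_comm]
    apply Finset.sum_congr rfl
    intro w _
    rw [Finset.mul_sum]
    exact Finset.sum_congr rfl fun r _ => (wordProd_snoc A w r).symm

lemma digits_len_le_iff (hB : 2 ≤ B) (n k : ℕ) :
    (Nat.digits B n).length ≤ k ↔ n < B ^ k := by
  constructor
  · intro h
    exact lt_of_lt_of_le (Nat.lt_base_pow_length_digits (by omega))
      (Nat.pow_le_pow_right (by omega) h)
  · intro h
    by_contra hc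
    push_neg at hc
    rcases Nat.eq_zero_or_pos n with rfl | hn
    · simp at hc
    · have h1 := Nat.base_pow_length_digits_le B n (by omega) (by omega)
      have h2 : B * n < B ^ (k + 1) := by
        rw [pow_succ, mul_comm (B ^ k) B]
        exact mul_lt_mul_of_pos_left h (by omega)
      have h3 : B ^ (k + 1) ≤ B ^ (Nat.digits B n).length :=
        Nat.pow_le_pow_right (by omega) (by omega)
      omega

lemma sum_range_ite {M : Type*} [AddCommMonoid M] (g : ℕ → M) (a b : ℕ) (h : a ≤ b) :
    ∑ n ∈ Finset.range b, (if n < a then g n else 0) = ∑ n ∈ Finset.range a, g n := by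
  have hsplit := Finset.sum_Ico_consecutive
    (f := fun n => if n < a then g n else 0) (Nat.zero_le a) h
  rw [← Finset.range_eq_Ico, ← Finset.range_eq_Ico] at hsplit
  have h2 : ∑ n ∈ Finset.Ico a b, (if n < a then g n else 0) = 0 :=
    Finset.sum_eq_zero fun n hn => if_neg (by rw [Finset.mem_Ico] at hn; omega)
  rw [← hsplit, h2, add_zero]
  exact Finset.sum_congr rfl fun n hn => if_pos (Finset.mem_range.mp hn)

lemma sum_shift {M : Type*} [AddCommMonoid M] (g : ℕ → M) (L : ℕ) :
    ∀ m : ℕ, ∑ k ∈ Finset.range m, (if L ≤ k then g (k - L) else 0)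
      = ∑ j ∈ Finset.range (m - L), g j := by
  intro m
  induction m with
  | zero => simp
  | succ m ih =>
    rw [Finset.sum_range_succ, ih]
    by_cases h : L ≤ m
    · rw [if_pos h, show m + 1 - L = (m - L) + 1 by omega, Finset.sum_range_succ]
    · rw [if_neg h, show m + 1 - L = m - L by omega, add_zero]

lemma sum_mulVec {ι : Type*} (s : Finset ι) (M : ι → Matrix (Fin d) (Fin d) ℂ)
    (C : Fin d → ℂ) : (∑ i ∈ s, M i).mulVec C = ∑ i ∈ s, (M i).mulVec C := by
  induction s using Finset.cons_induction with
  | empty => simp [Matrix.zero_mulVec]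
  | cons a s ha ih => rw [Finset.sum_cons, Finset.sum_cons, Matrix.add_mulVec, ih]

end RunSumAux

/-- splitting of the running sum `Σ_{n=0}^N A_{w(n)} C` for
`B^K ≤ N < B^{K+1}`. -/
theorem runSum_integer_split (B d : ℕ) (hB : 2 ≤ B) (hd : 1 ≤ d)
    (A : Fin B → Matrix (Fin d) (Fin d) ℂ) (C : Fin d → ℂ)
    (N K : ℕ) (hN : 1 ≤ N) (hK1 : B ^ K ≤ N) (hK2 : N < B ^ (K + 1)) :
    ∑ n ∈ Finset.range (N + 1), (digitProd A n).mulVec C =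
      ((1 : Matrix (Fin d) (Fin d) ℂ) - A ⟨0, by omega⟩).mulVec
          (∑ k ∈ Finset.range (K + 1), ((∑ r, A r) ^ k).mulVec C) +
        ∑ w : Fin (K + 1) → Fin B,
          if wordIntVal w ≤ N then (wordProd A w).mulVec C else 0 := by
  classical
  have hB0 : 0 < B := by omega
  -- Step 1: rewrite the word sum as a sum over `n ∈ range (N+1)` of padded products.
  have hword : (∑ w : Fin (K + 1) → Fin B,
        if wordIntVal w ≤ N then (wordProd A w).mulVec C else 0)
      = ∑ n ∈ Finset.range (N + 1), (RunSumAux.padProd hB0 A (K + 1) n).mulVec C := by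
    calc ∑ w : Fin (K + 1) → Fin B,
          (if wordIntVal w ≤ N then (wordProd A w).mulVec C else 0)
        = ∑ w : Fin (K + 1) → Fin B,
            (fun n => if n ≤ N then (RunSumAux.padProd hB0 A (K + 1) n).mulVec C else 0)
              (wordIntVal w) :=
          Finset.sum_congr rfl fun w _ => by
            simp only [RunSumAux.wordProd_eq_padProd hB A w]
      _ = ∑ n ∈ Finset.range (B ^ (K + 1)),
            (if n ≤ N then (RunSumAux.padProd hB0 A (K + 1) n).mulVec C else 0) :=
          RunSumAux.sum_words_eq_sum_range hB (K + 1)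
            (fun n => if n ≤ N then (RunSumAux.padProd hB0 A (K + 1) n).mulVec C else 0)
      _ = ∑ n ∈ Finset.range (B ^ (K + 1)),
            (if n < N + 1 then (RunSumAux.padProd hB0 A (K + 1) n).mulVec C else 0) :=
          Finset.sum_congr rfl fun n _ => by
            by_cases h : n ≤ N
            · rw [if_pos h, if_pos (by omega)]
            · rw [if_neg h, if_neg (by omega)]
      _ = ∑ n ∈ Finset.range (N + 1), (RunSumAux.padProd hB0 A (K + 1) n).mulVec C :=
          RunSumAux.sum_range_ite _ _ _ (by omega)
  rw [hword, ← RunSumAux.sum_mulVec, ← RunSumAux.sum_mulVec, ← RunSumAux.sum_mulVec,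
    Matrix.mulVec_mulVec, ← Matrix.add_mulVec]
  -- Step 2: the matrix identity.
  have key1 : ∑ k ∈ Finset.range (K + 1), (∑ r, A r) ^ k
      = ∑ n ∈ Finset.range (N + 1),
          ∑ j ∈ Finset.range (K + 1 - (Nat.digits B n).length),
            (A ⟨0, hB0⟩) ^ j * digitProd A n := by
    have e1 : ∀ k ∈ Finset.range (K + 1), (∑ r, A r) ^ k
        = ∑ n ∈ Finset.range (N + 1),
            (if n < B ^ k then RunSumAux.padProd hB0 A k n else 0) := by
      intro k hk
      rw [Finset.mem_range] at hk
      have hkN : B ^ k ≤ N + 1 :=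
        le_trans (le_trans (Nat.pow_le_pow_right (by omega) (by omega)) hK1) (by omega)
      calc (∑ r, A r) ^ k = ∑ w : Fin k → Fin B, wordProd A w := RunSumAux.sum_pow_eq A k
        _ = ∑ w : Fin k → Fin B,
              (fun n => RunSumAux.padProd hB0 A k n) (wordIntVal w) :=
            Finset.sum_congr rfl fun w _ => by
              simp only [RunSumAux.wordProd_eq_padProd hB A w]
        _ = ∑ n ∈ Finset.range (B ^ k), RunSumAux.padProd hB0 A k n :=
            RunSumAux.sum_words_eq_sum_range hB k (fun n => RunSumAux.padProd hB0 A k n)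
        _ = ∑ n ∈ Finset.range (N + 1),
              (if n < B ^ k then RunSumAux.padProd hB0 A k n else 0) :=
            (RunSumAux.sum_range_ite _ _ _ hkN).symm
    rw [Finset.sum_congr rfl e1, Finset.sum_comm]
    apply Finset.sum_congr rfl
    intro n _
    have e2 : ∀ k, (if n < B ^ k then RunSumAux.padProd hB0 A k n else 0)
        = (if (Nat.digits B n).length ≤ k then
            (A ⟨0, hB0⟩) ^ (k - (Nat.digits B n).length) * digitProd A n else 0) := by
      intro k
      by_cases h : n < B ^ k
      · rw [if_pos h, if_pos ((RunSumAux.digits_len_le_iff hB n k).mpr h)]; rfl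
      · rw [if_neg h, if_neg (fun hh => h ((RunSumAux.digits_len_le_iff hB n k).mp hh))]
    rw [Finset.sum_congr rfl fun k _ => e2 k]
    exact RunSumAux.sum_shift (fun j => (A ⟨0, hB0⟩) ^ j * digitProd A n) _ (K + 1)
  have key2 : ∀ n, digitProd A n = RunSumAux.padProd hB0 A (K + 1) n
      + ((1 : Matrix (Fin d) (Fin d) ℂ) - A ⟨0, hB0⟩) *
          ∑ j ∈ Finset.range (K + 1 - (Nat.digits B n).length),
            (A ⟨0, hB0⟩) ^ j * digitProd A n := by
    intro n
    rw [← Finset.sum_mul, ← mul_assoc]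
    have hg : ((1 : Matrix (Fin d) (Fin d) ℂ) - A ⟨0, hB0⟩) *
        ∑ j ∈ Finset.range (K + 1 - (Nat.digits B n).length), (A ⟨0, hB0⟩) ^ j
        = 1 - (A ⟨0, hB0⟩) ^ (K + 1 - (Nat.digits B n).length) := by
      rw [show ((1 : Matrix (Fin d) (Fin d) ℂ) - A ⟨0, hB0⟩) = -(A ⟨0, hB0⟩ - 1) from
        (neg_sub _ _).symm, neg_mul, mul_geom_sum, neg_sub]
    rw [hg, RunSumAux.padProd, sub_mul, one_mul]
    abel
  have main : ∑ n ∈ Finset.range (N + 1), digitProd A n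
      = ((1 : Matrix (Fin d) (Fin d) ℂ) - A ⟨0, hB0⟩) *
          (∑ k ∈ Finset.range (K + 1), (∑ r, A r) ^ k)
        + ∑ n ∈ Finset.range (N + 1), RunSumAux.padProd hB0 A (K + 1) n := by
    rw [key1, Finset.mul_sum]
    rw [Finset.sum_congr rfl fun n _ => key2 n, Finset.sum_add_distrib]
    rw [add_comm]
  rw [main]
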